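/- arXiv:1403.6362 — 4 statements merged into one kernel-verified Lean document; each statement's English description precedes it below -/
import Mathlib

section
/- Define G(ξ₁,ξ₂) = 2ξ₂/√(1+ω²ξ₁²) + Λ₀(ξ₁²+ξ₂²) − (a/4)(ξ₁²+ξ₂²)². Then the gradient identities ∂G/∂ξ₁ = −[(2+2ω²(ξ₁²+ξ₂²))/(1+ω²ξ₁²)^{3/2}]·f₂ and ∂G/∂ξ₂ = [(2+2ω²(ξ₁²+ξ₂²))/(1+ω²ξ₁²)^{3/2}]·f₁ hold, where f₁(ξ₁,ξ₂) = (1+ω²ξ₁²)(2 + √(1+ω²ξ₁²)·ξ₂·(2Λ₀ − a(ξ₁²+ξ₂²)))/(2(1+ω²(ξ₁²+ξ₂²))) and f₂(ξ₁,ξ₂) = ξ₁(2ω²ξ₂ − 2Λ₀(1+ω²ξ₁²)^{3/2} + a(ξ₁²+ξ₂²)(1+ω²ξ₁²)^{3/2})/(2(1+ω²(ξ₁²+ξ₂²))). -/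
noncomputable def G (ω Λ₀ a ξ₁ ξ₂ : ℝ) : ℝ :=
  2 * ξ₂ / Real.sqrt (1 + ω^2 * ξ₁^2) + Λ₀ * (ξ₁^2 + ξ₂^2) - a / 4 * (ξ₁^2 + ξ₂^2)^2

noncomputable def f₁ (ω Λ₀ a ξ₁ ξ₂ : ℝ) : ℝ :=
  (1 + ω^2 * ξ₁^2) * (2 + Real.sqrt (1 + ω^2 * ξ₁^2) * ξ₂ * (2 * Λ₀ - a * (ξ₁^2 + ξ₂^2))) /
    (2 * (1 + ω^2 * (ξ₁^2 + ξ₂^2)))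

noncomputable def f₂ (ω Λ₀ a ξ₁ ξ₂ : ℝ) : ℝ :=
  ξ₁ * (2 * ω^2 * ξ₂ - 2 * Λ₀ * (1 + ω^2 * ξ₁^2) ^ ((3:ℝ)/2)
      + a * (ξ₁^2 + ξ₂^2) * (1 + ω^2 * ξ₁^2) ^ ((3:ℝ)/2)) /
    (2 * (1 + ω^2 * (ξ₁^2 + ξ₂^2)))

theorem gradient_identities (ω Λ₀ a : ℝ) (hω : ω > 0) (ξ₁ ξ₂ : ℝ) :
    HasDerivAt (fun x => G ω Λ₀ a x ξ₂)
      (-((2 + 2 * ω^2 * (ξ₁^2 + ξ₂^2)) / (1 + ω^2 * ξ₁^2) ^ ((3:ℝ)/2)) * f₂ ω Λ₀ a ξ₁ ξ₂) ξ₁ ∧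
    HasDerivAt (fun y => G ω Λ₀ a ξ₁ y)
      ((2 + 2 * ω^2 * (ξ₁^2 + ξ₂^2)) / (1 + ω^2 * ξ₁^2) ^ ((3:ℝ)/2) * f₁ ω Λ₀ a ξ₁ ξ₂) ξ₂ := by
  have hX : (0:ℝ) < 1 + ω^2 * ξ₁^2 := by positivity
  set s := Real.sqrt (1 + ω^2 * ξ₁^2) with hsdef
  have hspos : 0 < s := Real.sqrt_pos.mpr hX
  have hs : s ^ 2 = 1 + ω^2 * ξ₁^2 := Real.sq_sqrt hX.le
  have hrpow : (1 + ω^2 * ξ₁^2) ^ ((3:ℝ)/2) = s ^ 3 := by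
    rw [show ((3:ℝ)/2) = (1/2) * (3:ℕ) by norm_num, Real.rpow_mul hX.le, Real.rpow_natCast,
      ← Real.sqrt_eq_rpow]
  have hden : (0:ℝ) < 1 + ω^2 * (ξ₁^2 + ξ₂^2) := by positivity
  constructor
  · -- derivative in ξ₁
    have hinner : HasDerivAt (fun x : ℝ => 1 + ω^2 * x^2) (2 * ω^2 * ξ₁) ξ₁ := by
      have := ((hasDerivAt_pow 2 ξ₁).const_mul (ω^2)).const_add 1
      simpa [mul_comm, mul_assoc, mul_left_comm] using this
    have hsqrt : HasDerivAt (fun x : ℝ => Real.sqrt (1 + ω^2 * x^2))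
        (1 / (2 * s) * (2 * ω^2 * ξ₁)) ξ₁ :=
      (Real.hasDerivAt_sqrt hX.ne').comp ξ₁ hinner
    have hdiv : HasDerivAt (fun x : ℝ => 2 * ξ₂ / Real.sqrt (1 + ω^2 * x^2))
        ((0 * s - 2 * ξ₂ * (1 / (2 * s) * (2 * ω^2 * ξ₁))) / s ^ 2) ξ₁ :=
      (hasDerivAt_const ξ₁ (2 * ξ₂)).div hsqrt hspos.ne'
    have h1 : HasDerivAt (fun x : ℝ => x^2 + ξ₂^2) (2 * ξ₁) ξ₁ := by
      simpa using (hasDerivAt_pow 2 ξ₁).add_const (ξ₂^2)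
    have hlin : HasDerivAt (fun x : ℝ => Λ₀ * (x^2 + ξ₂^2)) (Λ₀ * (2 * ξ₁)) ξ₁ :=
      h1.const_mul Λ₀
    have hquad : HasDerivAt (fun x : ℝ => a / 4 * (x^2 + ξ₂^2)^2)
        (a / 4 * (2 * (ξ₁^2 + ξ₂^2) * (2 * ξ₁))) ξ₁ := by
      have := (h1.pow 2).const_mul (a/4)
      refine this.congr_deriv ?_
      push_cast; ring
    have hfull := (hdiv.add hlin).sub hquad
    simp only [G]
    refine hfull.congr_deriv ?_
    simp only [f₂, hrpow]
    field_simp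
    ring
  · -- derivative in ξ₂
    have h1 : HasDerivAt (fun y : ℝ => ξ₁^2 + y^2) (2 * ξ₂) ξ₂ := by
      simpa using (hasDerivAt_pow 2 ξ₂).const_add (ξ₁^2)
    have h2 : HasDerivAt (fun y : ℝ => 2 * y / s) (2 / s) ξ₂ := by
      simpa [div_eq_mul_inv, mul_comm, mul_assoc] using
        ((hasDerivAt_id ξ₂).const_mul 2).div_const s
    have hquad : HasDerivAt (fun y : ℝ => a / 4 * (ξ₁^2 + y^2)^2)
        (a / 4 * (2 * (ξ₁^2 + ξ₂^2) * (2 * ξ₂))) ξ₂ := by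
      have := (h1.pow 2).const_mul (a/4)
      refine this.congr_deriv ?_
      push_cast; ring
    have hfull := (h2.add (h1.const_mul Λ₀)).sub hquad
    simp only [G]
    refine hfull.congr_deriv ?_
    rw [hrpow]
    simp only [f₁, ← hs]
    field_simp
    rw [Real.sqrt_sq hspos.le]
    ring
end

section
/- If (ξ₁(s), ξ₂(s)) solves the ODE system ξ₁' = f₁(ξ₁,ξ₂), ξ₂' = f₂(ξ₁,ξ₂) (with f₁, f₂ as above), then the function s ↦ G(ξ₁(s), ξ₂(s)) is constant. -/
theorem G_constant_along_solutions (ω Λ₀ a : ℝ) (hω : ω > 0) (ξ₁ ξ₂ : ℝ → ℝ)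
    (h₁ : ∀ s, HasDerivAt ξ₁ (f₁ ω Λ₀ a (ξ₁ s) (ξ₂ s)) s)
    (h₂ : ∀ s, HasDerivAt ξ₂ (f₂ ω Λ₀ a (ξ₁ s) (ξ₂ s)) s) :
    ∀ s t : ℝ, G ω Λ₀ a (ξ₁ s) (ξ₂ s) = G ω Λ₀ a (ξ₁ t) (ξ₂ t) := by
  have key : ∀ s, HasDerivAt (fun t => G ω Λ₀ a (ξ₁ t) (ξ₂ t)) 0 s := by
    intro s
    have hq : (0:ℝ) < 1 + ω^2 * (ξ₁ s)^2 := by positivity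
    have hinner : HasDerivAt (fun t => 1 + ω^2 * (ξ₁ t)^2)
        (ω^2 * (2 * ξ₁ s ^ 1 * f₁ ω Λ₀ a (ξ₁ s) (ξ₂ s))) s := by
      have := ((h₁ s).pow 2).const_mul (ω^2)
      simpa using this.const_add 1
    have hu0 : Real.sqrt (1 + ω^2 * (ξ₁ s)^2) > 0 := Real.sqrt_pos.mpr hq
    have hsqrt := hinner.sqrt hq.ne'
    have hdiv := ((h₂ s).const_mul 2).div hsqrt hu0.ne'
    have hsum : HasDerivAt (fun t => (ξ₁ t)^2 + (ξ₂ t)^2)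
        (2 * ξ₁ s ^ 1 * f₁ ω Λ₀ a (ξ₁ s) (ξ₂ s) + 2 * ξ₂ s ^ 1 * f₂ ω Λ₀ a (ξ₁ s) (ξ₂ s)) s := by
      have := ((h₁ s).pow 2).add ((h₂ s).pow 2)
      exact this.congr_deriv (by simp)
    have hG := (hdiv.add (hsum.const_mul Λ₀)).sub ((hsum.pow 2).const_mul (a/4))
    have hGfun : (fun t => G ω Λ₀ a (ξ₁ t) (ξ₂ t))
        = fun t => 2 * ξ₂ t / Real.sqrt (1 + ω^2 * (ξ₁ t)^2)
          + Λ₀ * ((ξ₁ t)^2 + (ξ₂ t)^2) - a / 4 * ((ξ₁ t)^2 + (ξ₂ t)^2)^2 := by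
      funext t; simp [G]
    rw [hGfun]
    refine hG.congr_deriv ?_
    -- algebra: show 0 equals the computed derivative
    set x := ξ₁ s
    set y := ξ₂ s
    set u := Real.sqrt (1 + ω^2 * x^2) with hu_def
    have hu : u^2 = 1 + ω^2 * x^2 := Real.sq_sqrt hq.le
    have h32 : (1 + ω^2 * x^2) ^ ((3:ℝ)/2) = u^3 := by
      rw [show ((3:ℝ)/2) = (1/2) * 3 by norm_num, Real.rpow_mul hq.le, ← Real.sqrt_eq_rpow,
        ← hu_def, show (3:ℝ) = ((3:ℕ):ℝ) by norm_num, Real.rpow_natCast]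
    have hD : (0:ℝ) < 2 * (1 + ω^2 * (x^2 + y^2)) := by positivity
    simp only [f₁, f₂, h32, ← hu_def, pow_one]
    push_cast
    rw [← hu]
    field_simp
    ring
  intro s t
  exact is_const_of_deriv_eq_zero (fun x => (key x).differentiableAt)
    (fun x => (key x).deriv) s t
end

section
/- Fix a ≠ 0, Λ₀, C real. If a point (ξ₁,ξ₂) lies on the level set G(ξ₁,ξ₂) = C, then setting r = ξ₁² + ξ₂², the polynomial p(r) = −16C² + 64r + 32CΛ₀r − 16Λ₀²r² − 8aCr² + 8aΛ₀r³ − a²r⁴ satisfies p(r) ≥ 0. In particular, since p has degree 4 with negative leading coefficient −a², the set of r for which p(r) ≥ 0 is bounded, and hence every level set of G is bounded in ℝ². -/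
def p (a Λ₀ C r : ℝ) : ℝ :=
  -16 * C^2 + 64 * r + 32 * C * Λ₀ * r - 16 * Λ₀^2 * r^2 - 8 * a * C * r^2
    + 8 * a * Λ₀ * r^3 - a^2 * r^4

set_option maxHeartbeats 1000000 in
theorem level_sets_bounded (ω Λ₀ a C : ℝ) (hω : ω > 0) (ha : a ≠ 0) :
    (∀ ξ₁ ξ₂ : ℝ, G ω Λ₀ a ξ₁ ξ₂ = C → p a Λ₀ C (ξ₁^2 + ξ₂^2) ≥ 0) ∧
    (∃ M : ℝ, ∀ r : ℝ, p a Λ₀ C r ≥ 0 → r ≤ M) ∧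
    Bornology.IsBounded {q : ℝ × ℝ | G ω Λ₀ a q.1 q.2 = C} := by
  have key : ∀ ξ₁ ξ₂ : ℝ, G ω Λ₀ a ξ₁ ξ₂ = C → p a Λ₀ C (ξ₁^2 + ξ₂^2) ≥ 0 := by
    intro ξ₁ ξ₂ h
    set r := ξ₁^2 + ξ₂^2 with hrdef
    have hs1 : (1:ℝ) ≤ 1 + ω^2 * ξ₁^2 := by nlinarith [sq_nonneg (ω*ξ₁)]
    have hs : (1:ℝ) ≤ Real.sqrt (1 + ω^2 * ξ₁^2) := by
      have := Real.sqrt_le_sqrt hs1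
      rwa [Real.sqrt_one] at this
    have hspos : Real.sqrt (1 + ω^2 * ξ₁^2) > 0 := lt_of_lt_of_le one_pos hs
    have hsq : (Real.sqrt (1 + ω^2 * ξ₁^2))^2 = 1 + ω^2 * ξ₁^2 :=
      Real.sq_sqrt (by linarith)
    unfold G at h
    have h2 : 2 * ξ₂ = (C - Λ₀ * r + a/4 * r^2) * Real.sqrt (1 + ω^2 * ξ₁^2) := by
      have hdiv : 2 * ξ₂ / Real.sqrt (1 + ω^2 * ξ₁^2) = C - Λ₀ * r + a/4 * r^2 := by
        linarith
      field_simp at hdiv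
      linear_combination hdiv / 4
    have h4 : 4 * ξ₂^2 = (C - Λ₀ * r + a/4 * r^2)^2 * (1 + ω^2 * ξ₁^2) := by
      have hsq2 := congrArg (fun x => x^2) h2
      simp only [mul_pow] at hsq2
      rw [hsq] at hsq2
      linear_combination hsq2
    have hp : p a Λ₀ C r = 64 * r - 16 * (C - Λ₀ * r + a/4 * r^2)^2 := by
      unfold p; ring
    have hq2 : (C - Λ₀ * r + a/4 * r^2)^2 ≤ 4 * ξ₂^2 := by
      nlinarith [mul_nonneg (sq_nonneg (C - Λ₀ * r + a/4 * r^2)) (sq_nonneg (ω*ξ₁))]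
    have hrξ : 4 * ξ₂^2 ≤ 4 * r := by nlinarith [sq_nonneg ξ₁]
    rw [hp]; linarith
  have hbdd : ∃ M : ℝ, ∀ r : ℝ, p a Λ₀ C r ≥ 0 → r ≤ M := by
    obtain ⟨K, hKdef⟩ : ∃ K : ℝ, K = 64 + 32*|C*Λ₀| + 16*Λ₀^2 + 8*|a*C| + 8*|a*Λ₀| + 1 :=
      ⟨_, rfl⟩
    have hK : K ≥ 1 := by
      rw [hKdef]
      have := abs_nonneg (C*Λ₀); have := abs_nonneg (a*C); have := abs_nonneg (a*Λ₀)
      nlinarith [sq_nonneg Λ₀]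
    have ha2 : a^2 > 0 := by positivity
    refine ⟨max 1 (4*K/a^2), fun r hr => ?_⟩
    by_contra hcon
    push_neg at hcon
    have h1 : r > 1 := lt_of_le_of_lt (le_max_left _ _) hcon
    have h2 : 4*K/a^2 < r := lt_of_le_of_lt (le_max_right _ _) hcon
    have h3 : 4*K < a^2 * r := by
      rw [div_lt_iff₀ ha2] at h2; linarith [h2]
    have hr0 : r > 0 := by linarith
    have hr3 : r^3 > 0 := by positivity
    have hb : a^2 * r^4 > 4*K*r^3 := by nlinarith [mul_pos hr3 (by linarith : a^2*r - 4*K > 0)]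
    have e0 : r ≤ r^2 := by nlinarith
    have e2 : r^2 ≤ r^3 := by nlinarith [mul_le_mul_of_nonneg_left e0 hr0.le]
    have e13 : r ≤ r^3 := le_trans e0 e2
    have f1 : C*Λ₀*r ≤ |C*Λ₀| * r^3 :=
      le_trans (mul_le_mul_of_nonneg_right (le_abs_self _) hr0.le)
        (mul_le_mul_of_nonneg_left e13 (abs_nonneg _))
    have f2 : -(a*C)*r^2 ≤ |a*C| * r^3 :=
      le_trans (mul_le_mul_of_nonneg_right (neg_le_abs _) (sq_nonneg r))
        (mul_le_mul_of_nonneg_left e2 (abs_nonneg _))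
    have f3 : a*Λ₀*r^3 ≤ |a*Λ₀| * r^3 :=
      mul_le_mul_of_nonneg_right (le_abs_self _) hr3.le
    have f4 : Λ₀^2 * r^3 ≥ 0 := by positivity
    have f5 : (64:ℝ)*r ≤ 64*r^3 := by linarith
    have hc : K * r^3 ≥ 64*r + 32*C*Λ₀*r - 16*Λ₀^2*r^2 - 8*a*C*r^2 + 8*a*Λ₀*r^3 - 16*C^2 := by
      rw [hKdef]
      have g1 : Λ₀^2 * r^2 ≥ 0 := by positivity
      ring_nf
      ring_nf at f1 f2 f3 f4 f5 g1
      linarith [f1, f2, f3, f4, f5, sq_nonneg C, hr3.le, g1]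
    have hKpos : K * r^3 > 0 := mul_pos (by linarith) hr3
    unfold p at hr
    linarith [hr, hb, hc, hKpos]
  refine ⟨key, hbdd, ?_⟩
  obtain ⟨M, hM⟩ := hbdd
  set R := Real.sqrt (max M 0) with hRdef
  have hsub : {q : ℝ × ℝ | G ω Λ₀ a q.1 q.2 = C} ⊆ Metric.closedBall (0 : ℝ × ℝ) R := by
    intro q hq
    have hr : q.1^2 + q.2^2 ≤ M := hM _ (key q.1 q.2 hq)
    have hr' : q.1^2 + q.2^2 ≤ max M 0 := le_trans hr (le_max_left _ _)
    have h1 : |q.1| ≤ R := by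
      rw [hRdef, ← Real.sqrt_sq_eq_abs]
      exact Real.sqrt_le_sqrt (by nlinarith [sq_nonneg q.2])
    have h2 : |q.2| ≤ R := by
      rw [hRdef, ← Real.sqrt_sq_eq_abs]
      exact Real.sqrt_le_sqrt (by nlinarith [sq_nonneg q.1])
    simp only [Metric.mem_closedBall, dist_zero_right, Prod.norm_def, Real.norm_eq_abs]
    exact max_le h1 h2
  exact Metric.isBounded_closedBall.subset hsub
end

section
/- Fix ω > 0, a ≠ 0, Λ₀, C real, and let r ≥ 0 with p(r) ≥ 0 where p(r) = −16C² + 64r + 32CΛ₀r − 16Λ₀²r² − 8aCr² + 8aΛ₀r³ − a²r⁴. Then the point (ξ₁, ξ₂) with ξ₁ = √(p(r)) / √(64 + (4C + r(−4Λ₀ + ar))²ω²) and ξ₂ = (4C + r(−4Λ₀ + ar))·√(1 + rω²) / √(64 + (4C + r(−4Λ₀ + ar))²ω²) satisfies ξ₁² + ξ₂² = r and G(ξ₁, ξ₂) = C. -/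
theorem rho_parametrizes_level_set (ω Λ₀ a C r : ℝ) (hω : ω > 0) (ha : a ≠ 0)
    (hr : 0 ≤ r) (hp : p a Λ₀ C r ≥ 0)
    (ξ₁ ξ₂ : ℝ)
    (hξ₁ : ξ₁ = Real.sqrt (p a Λ₀ C r) /
        Real.sqrt (64 + (4 * C + r * (-4 * Λ₀ + a * r))^2 * ω^2))
    (hξ₂ : ξ₂ = (4 * C + r * (-4 * Λ₀ + a * r)) * Real.sqrt (1 + r * ω^2) /
        Real.sqrt (64 + (4 * C + r * (-4 * Λ₀ + a * r))^2 * ω^2)) :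
    ξ₁^2 + ξ₂^2 = r ∧ G ω Λ₀ a ξ₁ ξ₂ = C := by
  set B := 4 * C + r * (-4 * Λ₀ + a * r) with hB
  have h1 : (0:ℝ) < 1 + r * ω^2 := by positivity
  have hD : (0:ℝ) < 64 + B^2 * ω^2 := by positivity
  have sξ₁ : ξ₁^2 = p a Λ₀ C r / (64 + B^2 * ω^2) := by
    rw [hξ₁, div_pow, Real.sq_sqrt hp, Real.sq_sqrt hD.le]
  have sξ₂ : ξ₂^2 = B^2 * (1 + r * ω^2) / (64 + B^2 * ω^2) := by
    rw [hξ₂, div_pow, mul_pow, Real.sq_sqrt h1.le, Real.sq_sqrt hD.le]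
  have hsum : ξ₁^2 + ξ₂^2 = r := by
    rw [sξ₁, sξ₂, ← add_div, div_eq_iff hD.ne']
    simp only [p, hB]; ring
  refine ⟨hsum, ?_⟩
  have hpB : p a Λ₀ C r = 64 * r - B^2 := by simp only [p, hB]; ring
  have key : 1 + ω^2 * ξ₁^2 = 64 * (1 + r * ω^2) / (64 + B^2 * ω^2) := by
    rw [sξ₁, hpB]
    field_simp
    ring
  have h64 : Real.sqrt (64 * (1 + r * ω^2) / (64 + B^2 * ω^2))
      = 8 * Real.sqrt (1 + r * ω^2) / Real.sqrt (64 + B^2 * ω^2) := by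
    rw [Real.sqrt_div' _ ?_, Real.sqrt_mul (by norm_num : (0:ℝ) ≤ 64),
      show (64:ℝ) = 8^2 by norm_num, Real.sqrt_sq (by norm_num : (0:ℝ) ≤ 8)]
    · positivity
  have s1 : Real.sqrt (1 + r * ω^2) > 0 := Real.sqrt_pos.mpr h1
  have s2 : Real.sqrt (64 + B^2 * ω^2) > 0 := Real.sqrt_pos.mpr hD
  unfold G
  rw [hsum, key, h64, hξ₂]
  field_simp
  rw [hB]; ring
end
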